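/- Let A be an abelian category of finite length, and let S be a full subcategory closed under direct sums and direct summands such that Ext¹(S, S) = 0. Suppose Y is an object with Ext¹(S', Y) = 0 for all S' ∈ S, and there are short exact sequences 0 → Y → M → X → 0 and an epimorphism S₀ ↠ Y with S₀ ∈ S such that the kernel also admits an epimorphism from an object of S. If additionally Ext²(X, −) = 0 and Ext¹(X, S₀) = 0, then 0 → Y → M → X → 0 splits. -/

import Mathlib

open CategoryTheory CategoryTheory.Limits

universe w v u

/-- `P` is a direct summand of `Q`. -/
def IsDirectSummand {A : Type u} [Category.{v} A] (P Q : A) : Prop :=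
  ∃ (i : P ⟶ Q) (r : Q ⟶ P), i ≫ r = 𝟙 P

section Aux

variable {A : Type u} [Category.{v} A] [Abelian A] [HasExt.{w} A]

/-- The single functor composed with the homology functor is isomorphic to
the identity functor. -/
noncomputable def singleCompHomologyIso [HasDerivedCategory.{w} A] :
    DerivedCategory.singleFunctor A 0 ⋙ DerivedCategory.homologyFunctor A 0 ≅ 𝟭 A :=
  Functor.isoWhiskerRight
      ((SingleFunctors.evaluation _ _ 0).mapIso (DerivedCategory.singleFunctorsPostcompQIso A))
      (DerivedCategory.homologyFunctor A 0) ≪≫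
    Functor.associator _ _ _ ≪≫
    Functor.isoWhiskerLeft (CochainComplex.singleFunctor A 0)
      (DerivedCategory.homologyFunctorFactors A 0) ≪≫
    HomologicalComplex.homologyFunctorSingleIso A (ComplexShape.up ℤ) 0

/-- A short exact sequence `0 → Y → M → X → 0` with `Ext¹(X,Y) = 0` splits. -/
lemma split_of_subsingleton_ext {Y M X : A}
    (i : Y ⟶ M) (p : M ⟶ X) (hw : i ≫ p = 0)
    (hse : (ShortComplex.mk i p hw).ShortExact)
    (h1 : Subsingleton (Abelian.Ext X Y 1)) :
    ∃ r : X ⟶ M, r ≫ p = 𝟙 X := by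
  letI := HasDerivedCategory.standard A
  have hz : hse.extClass = 0 := Subsingleton.elim _ _
  have hδ : hse.singleδ = 0 := by
    rw [← hse.extClass_hom, hz, Abelian.Ext.zero_hom]
  obtain ⟨s, hs⟩ : ∃ s : (DerivedCategory.singleFunctor A 0).obj X ⟶
      (DerivedCategory.singleFunctor A 0).obj M,
      𝟙 _ = s ≫ (DerivedCategory.singleFunctor A 0).map p := Pretriangulated.Triangle.coyoneda_exact₃ _
    hse.singleTriangle_distinguished (𝟙 _) (by
      simp [ShortComplex.ShortExact.singleTriangle, hδ]; exact Limits.comp_zero)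
  let e := singleCompHomologyIso (A := A)
  let H := DerivedCategory.homologyFunctor A 0
  refine ⟨e.inv.app X ≫ H.map s ≫ e.hom.app M, ?_⟩
  have hnat : e.hom.app M ≫ p =
      H.map ((DerivedCategory.singleFunctor A 0).map p) ≫ e.hom.app X := by
    simpa using (e.hom.naturality p).symm
  rw [Category.assoc, Category.assoc, hnat, ← Category.assoc (H.map s), ← H.map_comp]
  have : s ≫ (DerivedCategory.singleFunctor A 0).map p = 𝟙 _ := by
    have := hs.symm
    simpa [ShortComplex.ShortExact.singleTriangle] using this
  rw [this, H.map_id, Category.id_comp, Iso.inv_hom_id_app]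
  rfl

/-- If there is an epimorphism `q : S₀ ↠ Y` with `Ext¹(X,S₀) = 0` and
`Ext²(X,−) = 0`, then `Ext¹(X,Y) = 0`. -/
lemma ext1_subsingleton {Y X S₀ : A} (q : S₀ ⟶ Y) (hq : Epi q)
    (hX2 : ∀ B : A, Subsingleton (Abelian.Ext X B 2))
    (hXS₀ : Subsingleton (Abelian.Ext X S₀ 1)) :
    Subsingleton (Abelian.Ext X Y 1) := by
  let T : ShortComplex A := ShortComplex.mk (kernel.ι q) q (kernel.condition q)
  have hT : T.ShortExact := by
    refine ⟨ShortComplex.exact_of_f_is_kernel _ (kernelIsKernel q)⟩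
  have key : ∀ x : Abelian.Ext X Y 1, x = 0 := by
    intro x
    obtain ⟨x₂, hx₂⟩ := CategoryTheory.Abelian.Ext.covariant_sequence_exact₃ X hT x rfl
      (Subsingleton.elim (α := Abelian.Ext X (kernel q) 2) _ _)
    rw [← hx₂, Subsingleton.elim (α := Abelian.Ext X S₀ 1) x₂ 0, Abelian.Ext.zero_comp]
  exact ⟨fun a b => by rw [key a, key b]⟩

end Aux

/-- in an abelian length category, let `S` be a full subcategory
closed under direct sums and direct summands with `Ext¹(S,S) = 0`. If `Y`
satisfies `Ext¹(S',Y) = 0` for all `S' ∈ S`, `0 → Y → M → X → 0` is exact,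
there is an epi `S₀ ↠ Y` with `S₀ ∈ S` whose kernel also admits an epi from an
object of `S`, and `Ext²(X,−) = 0` and `Ext¹(X,S₀) = 0`, then the sequence
`0 → Y → M → X → 0` splits. -/
theorem stmt14 {A : Type u} [Category.{v} A] [Abelian A] [HasExt.{w} A]
    [HasBinaryBiproducts A]
    [∀ Z : A, IsNoetherianObject Z] [∀ Z : A, IsArtinianObject Z]
    (S : Set A)
    (hsum : ∀ P Q : A, P ∈ S → Q ∈ S → (P ⊞ Q) ∈ S)
    (hsummand : ∀ P Q : A, IsDirectSummand P Q → Q ∈ S → P ∈ S)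
    (hrigid : ∀ P ∈ S, ∀ Q ∈ S, Subsingleton (Abelian.Ext P Q 1))
    {Y M X : A}
    (hY : ∀ S' ∈ S, Subsingleton (Abelian.Ext S' Y 1))
    (i : Y ⟶ M) (p : M ⟶ X) (hw : i ≫ p = 0)
    (hse : (ShortComplex.mk i p hw).ShortExact)
    (S₀ : A) (hS₀ : S₀ ∈ S) (q : S₀ ⟶ Y) (hq : Epi q)
    (hker : ∃ S₁ ∈ S, ∃ e : S₁ ⟶ kernel q, Epi e)
    (hX2 : ∀ B : A, Subsingleton (Abelian.Ext X B 2))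
    (hXS₀ : Subsingleton (Abelian.Ext X S₀ 1)) :
    ∃ r : X ⟶ M, r ≫ p = 𝟙 X := by
  exact split_of_subsingleton_ext i p hw hse (ext1_subsingleton q hq hX2 hXS₀)
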